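/- arXiv:1910.12410 — 6 statements merged into one kernel-verified Lean document; each statement's English description precedes it below -/
import Mathlib

section
/- Fix a complex number q with |q| < 1 and define, for x \in \mathbb{C}, \(H_1(x) = \sum_{i,j,k\ge 0} (-1)^k \frac{q^{(i+2j+3k)(i+2j+3k-1)+3k^2+i+6j+6k}}{(q;q)_i (q^4;q^4)_j (q^6;q^6)_k}\, x^{i+2j+3k}\). Then for every x \in \mathbb{C}: \(H_1(x) - (1 + qx + q^2 x - q^3 x)\,H_1(q^2 x) - q^3 x\,(1 - q^2 x + q^3 x + q^4 x)\,H_1(q^4 x) + q^8 x^2\,(q^4 x - 1)\,H_1(q^6 x) = 0\). -/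
/-- The finite q-Pochhammer symbol `(a; q)_n = ∏_{m=0}^{n-1} (1 - a qᵐ)`. -/
noncomputable def qPoch (a q : ℂ) (n : ℕ) : ℂ := ∏ m ∈ Finset.range n, (1 - a * q ^ m)

/-- The Kanade–Russell series
`H₁(x) = ∑_{i,j,k ≥ 0} (-1)^k q^{(i+2j+3k)(i+2j+3k-1)+3k²+i+6j+6k}
         / ((q;q)_i (q⁴;q⁴)_j (q⁶;q⁶)_k) · x^{i+2j+3k}`. -/
noncomputable def H1 (q x : ℂ) : ℂ :=
  ∑' p : ℕ × ℕ × ℕ,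
    (-1 : ℂ) ^ p.2.2 *
      q ^ ((p.1 + 2 * p.2.1 + 3 * p.2.2) * (p.1 + 2 * p.2.1 + 3 * p.2.2 - 1)
          + 3 * p.2.2 ^ 2 + p.1 + 6 * p.2.1 + 6 * p.2.2) /
      (qPoch q q p.1 * qPoch (q ^ 4) (q ^ 4) p.2.1 * qPoch (q ^ 6) (q ^ 6) p.2.2) *
      x ^ (p.1 + 2 * p.2.1 + 3 * p.2.2)

namespace KRaux

/-- total degree -/
def N3 (p : ℕ × ℕ × ℕ) : ℕ := p.1 + 2 * p.2.1 + 3 * p.2.2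

/-- subtraction-free form of the exponent -/
def E3 (p : ℕ × ℕ × ℕ) : ℕ :=
  p.1 ^ 2 + 4 * p.2.1 ^ 2 + 12 * p.2.2 ^ 2 + 4 * (p.1 * p.2.1) + 6 * (p.1 * p.2.2)
    + 12 * (p.2.1 * p.2.2) + 4 * p.2.1 + 3 * p.2.2

noncomputable def F (q x : ℂ) (p : ℕ × ℕ × ℕ) : ℂ :=
  (-1 : ℂ) ^ p.2.2 * q ^ (E3 p) /
    (qPoch q q p.1 * qPoch (q ^ 4) (q ^ 4) p.2.1 * qPoch (q ^ 6) (q ^ 6) p.2.2) *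
    x ^ (N3 p)

lemma nn_aux (n : ℕ) : n * (n - 1) + n = n * n := by
  cases n with
  | zero => rfl
  | succ m =>
    have : (m+1) * (m+1) = (m+1) * m + (m+1) := by ring
    rw [this, Nat.succ_sub_one]

lemma E3_eq (i j k : ℕ) :
    (i + 2*j + 3*k) * (i + 2*j + 3*k - 1) + 3*k^2 + i + 6*j + 6*k = E3 (i, j, k) := by
  have h : (i + 2*j + 3*k) * (i + 2*j + 3*k - 1) + 3*k^2 + i + 6*j + 6*k + (i + 2*j + 3*k)
      = E3 (i, j, k) + (i + 2*j + 3*k) := by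
    calc (i + 2*j + 3*k) * (i + 2*j + 3*k - 1) + 3*k^2 + i + 6*j + 6*k + (i + 2*j + 3*k)
        = ((i + 2*j + 3*k) * (i + 2*j + 3*k - 1) + (i + 2*j + 3*k)) + (3*k^2 + i + 6*j + 6*k) := by
          ring
      _ = (i + 2*j + 3*k) * (i + 2*j + 3*k) + (3*k^2 + i + 6*j + 6*k) := by rw [nn_aux]
      _ = E3 (i, j, k) + (i + 2*j + 3*k) := by simp only [E3]; ring
  exact Nat.add_right_cancel h

lemma H1_eq (q x : ℂ) : H1 q x = ∑' p : ℕ × ℕ × ℕ, F q x p := by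
  unfold H1
  refine tsum_congr fun p => ?_
  obtain ⟨i, j, k⟩ := p
  rw [show (i + 2*j + 3*k) * (i + 2*j + 3*k - 1) + 3*k^2 + i + 6*j + 6*k = E3 (i,j,k) from
    E3_eq i j k]
  rfl

lemma one_sub_pow_ne {q : ℂ} (hq : ‖q‖ < 1) {m : ℕ} (hm : m ≠ 0) : (1 : ℂ) - q ^ m ≠ 0 := by
  have h1 : ‖q ^ m‖ < 1 := by
    rw [norm_pow]; exact pow_lt_one₀ (norm_nonneg q) hq hm
  intro h
  rw [sub_eq_zero] at h
  rw [← h] at h1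
  simp at h1

lemma qPoch_ne {q : ℂ} (hq : ‖q‖ < 1) (s n : ℕ) (hs : s ≠ 0) : qPoch (q^s) (q^s) n ≠ 0 := by
  unfold qPoch
  rw [Finset.prod_ne_zero_iff]
  intro m _
  have h : (q^s) * (q^s)^m = q^(s*(m+1)) := by
    rw [← pow_mul, ← pow_add]
    congr 1
    ring
  rw [h]
  exact one_sub_pow_ne hq (by positivity)

lemma qPoch_ne1 {q : ℂ} (hq : ‖q‖ < 1) (n : ℕ) : qPoch q q n ≠ 0 := by
  have := qPoch_ne hq 1 n one_ne_zero
  simpa using this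

lemma qPoch_succ (a q : ℂ) (n : ℕ) : qPoch a q (n+1) = qPoch a q n * (1 - a * q ^ n) :=
  Finset.prod_range_succ _ _

lemma rel1 (q x : ℂ) (hq : ‖q‖ < 1) (i j k : ℕ) :
    (1 - q ^ (i+1)) * F q x (i+1, j, k)
      = q ^ (2*(i + 2*j + 3*k) + 1) * x * F q x (i, j, k) := by
  have hp1 : qPoch q q (i+1) = qPoch q q i * (1 - q ^ (i+1)) := by
    rw [qPoch_succ]; ring
  have hE : E3 (i+1, j, k) = (2*(i + 2*j + 3*k) + 1) + E3 (i, j, k) := by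
    simp only [E3]; ring
  have hN : N3 (i+1, j, k) = N3 (i, j, k) + 1 := by simp only [N3]; omega
  have h1 : qPoch q q i ≠ 0 := qPoch_ne1 hq i
  have h2 : qPoch (q^4) (q^4) j ≠ 0 := qPoch_ne hq 4 j (by norm_num)
  have h3 : qPoch (q^6) (q^6) k ≠ 0 := qPoch_ne hq 6 k (by norm_num)
  have h4 : (1 : ℂ) - q ^ (i+1) ≠ 0 := one_sub_pow_ne hq (by omega)
  simp only [F, hE, hN, hp1]
  field_simp
  ring

lemma rel2 (q x : ℂ) (hq : ‖q‖ < 1) (i j k : ℕ) :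
    (1 - (q^4) ^ (j+1)) * F q x (i, j+1, k)
      = q ^ (4*(i + 2*j + 3*k) + 8) * x ^ 2 * F q x (i, j, k) := by
  have hp1 : qPoch (q^4) (q^4) (j+1) = qPoch (q^4) (q^4) j * (1 - (q^4) ^ (j+1)) := by
    rw [qPoch_succ]; ring
  have hE : E3 (i, j+1, k) = (4*(i + 2*j + 3*k) + 8) + E3 (i, j, k) := by
    simp only [E3]; ring
  have hN : N3 (i, j+1, k) = N3 (i, j, k) + 2 := by simp only [N3]; omega
  have h1 : qPoch q q i ≠ 0 := qPoch_ne1 hq i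
  have h2 : qPoch (q^4) (q^4) j ≠ 0 := qPoch_ne hq 4 j (by norm_num)
  have h3 : qPoch (q^6) (q^6) k ≠ 0 := qPoch_ne hq 6 k (by norm_num)
  have h4 : (1 : ℂ) - (q^4) ^ (j+1) ≠ 0 := by
    have : ((q^4) ^ (j+1)) = q ^ (4*(j+1)) := by rw [pow_mul]
    rw [this]
    exact one_sub_pow_ne hq (by omega)
  simp only [F, hE, hN, hp1]
  field_simp
  ring

lemma rel3 (q x : ℂ) (hq : ‖q‖ < 1) (i j k : ℕ) :
    (1 - (q^6) ^ (k+1)) * F q x (i, j, k+1)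
      = -(q ^ (6*(i + 2*j + 3*k) + 6*k + 15) * x ^ 3 * F q x (i, j, k)) := by
  have hp1 : qPoch (q^6) (q^6) (k+1) = qPoch (q^6) (q^6) k * (1 - (q^6) ^ (k+1)) := by
    rw [qPoch_succ]; ring
  have hE : E3 (i, j, k+1) = (6*(i + 2*j + 3*k) + 6*k + 15) + E3 (i, j, k) := by
    simp only [E3]; ring
  have hN : N3 (i, j, k+1) = N3 (i, j, k) + 3 := by simp only [N3]; omega
  have h1 : qPoch q q i ≠ 0 := qPoch_ne1 hq i
  have h2 : qPoch (q^4) (q^4) j ≠ 0 := qPoch_ne hq 4 j (by norm_num)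
  have h3 : qPoch (q^6) (q^6) k ≠ 0 := qPoch_ne hq 6 k (by norm_num)
  have h4 : (1 : ℂ) - (q^6) ^ (k+1) ≠ 0 := by
    have : ((q^6) ^ (k+1)) = q ^ (6*(k+1)) := by rw [pow_mul]
    rw [this]
    exact one_sub_pow_ne hq (by omega)
  simp only [F, hE, hN, hp1]
  field_simp
  ring

/-- partial-theta type series -/
noncomputable def Th (q x : ℂ) (M : ℕ) : ℂ := ∑' d : ℕ, q ^ (d*(d+2) + 2*d*M) * x ^ d

lemma key1 {c B : ℝ} (hc0 : 0 ≤ c) (hc1 : c < 1) (hB : 0 ≤ B) :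
    Summable (fun n : ℕ => c ^ (n^2) * B ^ n) := by
  apply summable_of_ratio_norm_eventually_le (r := 1/2) (by norm_num)
  have h2 : Filter.Tendsto (fun n : ℕ => 2*n+1) Filter.atTop Filter.atTop := by
    apply Filter.tendsto_atTop_atTop_of_monotone
    · intro a b h
      simp only []
      omega
    · intro b
      refine ⟨b, ?_⟩
      show b ≤ 2*b+1
      omega
  have ht : Filter.Tendsto (fun n : ℕ => c ^ (2*n+1) * B) Filter.atTop (nhds (0*B)) :=
    Filter.Tendsto.mul_const B
      ((tendsto_pow_atTop_nhds_zero_of_lt_one hc0 hc1).comp h2)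
  rw [zero_mul] at ht
  have hev := ht.eventually_lt_const (show (0:ℝ) < 1/2 by norm_num)
  filter_upwards [hev] with n hn
  have hsplit : c ^ ((n+1)^2) * B ^ (n+1) = (c ^ (2*n+1) * B) * (c ^ (n^2) * B ^ n) := by
    rw [show (n+1)^2 = n^2 + (2*n+1) by ring, pow_add, pow_succ]
    ring
  rw [Real.norm_eq_abs, Real.norm_eq_abs, hsplit, abs_of_nonneg (by positivity),
    abs_of_nonneg (by positivity)]
  exact mul_le_mul_of_nonneg_right hn.le (by positivity)

lemma summable_Th_term (q x : ℂ) (hq : ‖q‖ < 1) (M : ℕ) :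
    Summable (fun d : ℕ => q ^ (d*(d+2) + 2*d*M) * x ^ d) := by
  apply Summable.of_norm_bounded (g := fun d => ‖q‖ ^ (d^2) * ‖x‖ ^ d)
    (key1 (norm_nonneg q) hq (norm_nonneg x))
  intro d
  rw [norm_mul, norm_pow, norm_pow]
  apply mul_le_mul_of_nonneg_right _ (by positivity)
  apply pow_le_pow_of_le_one (norm_nonneg q) hq.le
  calc d^2 = d*d := by ring
    _ ≤ d*(d+2) := Nat.mul_le_mul_left d (by omega)
    _ ≤ d*(d+2) + 2*d*M := Nat.le_add_right _ _

lemma Th_bound (q x : ℂ) (hq : ‖q‖ < 1) :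
    ∃ C : ℝ, 0 ≤ C ∧ ∀ M : ℕ, ‖Th q x M‖ ≤ C := by
  have hbase : Summable (fun d : ℕ => ‖q‖ ^ (d*(d+2)) * ‖x‖ ^ d) := by
    apply Summable.of_nonneg_of_le (fun d => by positivity)
      (fun d => ?_) (key1 (norm_nonneg q) hq (norm_nonneg x))
    apply mul_le_mul_of_nonneg_right _ (by positivity)
    apply pow_le_pow_of_le_one (norm_nonneg q) hq.le
    calc d^2 = d*d := by ring
      _ ≤ d*(d+2) := Nat.mul_le_mul_left d (by omega)
  refine ⟨∑' d : ℕ, ‖q‖ ^ (d*(d+2)) * ‖x‖ ^ d, tsum_nonneg (fun d => by positivity), fun M => ?_⟩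
  have hnorm : Summable (fun d : ℕ => ‖q ^ (d*(d+2) + 2*d*M) * x ^ d‖) := by
    apply Summable.of_nonneg_of_le (fun d => norm_nonneg _) (fun d => ?_) hbase
    rw [norm_mul, norm_pow, norm_pow]
    apply mul_le_mul_of_nonneg_right _ (by positivity)
    exact pow_le_pow_of_le_one (norm_nonneg q) hq.le (Nat.le_add_right _ _)
  calc ‖Th q x M‖ ≤ ∑' d : ℕ, ‖q ^ (d*(d+2) + 2*d*M) * x ^ d‖ := norm_tsum_le_tsum_norm hnorm
    _ ≤ ∑' d : ℕ, ‖q‖ ^ (d*(d+2)) * ‖x‖ ^ d := by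
        apply Summable.tsum_le_tsum _ hnorm hbase
        intro d
        rw [norm_mul, norm_pow, norm_pow]
        apply mul_le_mul_of_nonneg_right _ (by positivity)
        exact pow_le_pow_of_le_one (norm_nonneg q) hq.le (Nat.le_add_right _ _)

lemma Th_comb (q x : ℂ) (hq : ‖q‖ < 1) (s : ℂ) (M : ℕ) :
    (1 - s) * Th q x M - q ^ (4*M+8) * x^2 * Th q x (M+2)
      + s * q ^ (6*M+15) * x^3 * Th q x (M+3)
    = (1 - s) + (1 - s) * q ^ (2*M+3) * x - s * q ^ (4*M+8) * x^2 := by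
  set u : ℕ → ℂ := fun d => q ^ (d*(d+2) + 2*d*M) * x ^ d *
    ((1 - s) + (1 - s) * q ^ (2*M+2*d+3) * x - s * q ^ (4*M+4*d+8) * x^2) with hu
  have hterm : ∀ d : ℕ,
      (1 - s) * (q ^ (d*(d+2) + 2*d*M) * x ^ d)
        - q ^ (4*M+8) * x^2 * (q ^ (d*(d+2) + 2*d*(M+2)) * x ^ d)
        + s * q ^ (6*M+15) * x^3 * (q ^ (d*(d+2) + 2*d*(M+3)) * x ^ d)
      = u d - u (d+1) := by
    intro d
    simp only [hu]
    rw [show d*(d+2) + 2*d*(M+2) = (d*(d+2) + 2*d*M) + 4*d by ring,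
        show d*(d+2) + 2*d*(M+3) = (d*(d+2) + 2*d*M) + 6*d by ring,
        show (d+1)*((d+1)+2) + 2*(d+1)*M = (d*(d+2) + 2*d*M) + (2*d + 2*M + 3) by ring,
        show 2*M+2*(d+1)+3 = (2*M+2*d+3) + 2 by ring,
        show 4*M+4*(d+1)+8 = (4*M+4*d+8) + 4 by ring]
    simp only [pow_add, pow_succ]
    ring
  have hsu : Summable u := by
    apply Summable.of_norm_bounded
      (g := fun d => ((1 + ‖s‖) + (1 + ‖s‖) * ‖x‖ + ‖s‖ * ‖x‖^2) * (‖q‖ ^ (d^2) * ‖x‖ ^ d))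
      (((key1 (norm_nonneg q) hq (norm_nonneg x))).mul_left _)
    intro d
    simp only [hu]
    rw [norm_mul, mul_comm (((1 + ‖s‖) + (1 + ‖s‖) * ‖x‖ + ‖s‖ * ‖x‖^2)) _]
    apply mul_le_mul
    · rw [norm_mul, norm_pow, norm_pow]
      apply mul_le_mul_of_nonneg_right _ (by positivity)
      apply pow_le_pow_of_le_one (norm_nonneg q) hq.le
      calc d^2 = d*d := by ring
        _ ≤ d*(d+2) := Nat.mul_le_mul_left d (by omega)
        _ ≤ d*(d+2) + 2*d*M := Nat.le_add_right _ _
    · calc ‖(1 - s) + (1 - s) * q ^ (2*M+2*d+3) * x - s * q ^ (4*M+4*d+8) * x^2‖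
          ≤ ‖(1 - s) + (1 - s) * q ^ (2*M+2*d+3) * x‖ + ‖s * q ^ (4*M+4*d+8) * x^2‖ :=
            norm_sub_le _ _
        _ ≤ ‖1 - s‖ + ‖(1 - s) * q ^ (2*M+2*d+3) * x‖ + ‖s * q ^ (4*M+4*d+8) * x^2‖ := by
            have := norm_add_le (1 - s) ((1 - s) * q ^ (2*M+2*d+3) * x)
            linarith
        _ ≤ (1 + ‖s‖) + (1 + ‖s‖) * ‖x‖ + ‖s‖ * ‖x‖^2 := by
            have e1 : ‖(1 : ℂ) - s‖ ≤ 1 + ‖s‖ := by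
              calc ‖(1:ℂ) - s‖ ≤ ‖(1:ℂ)‖ + ‖s‖ := norm_sub_le _ _
                _ = 1 + ‖s‖ := by rw [norm_one]
            have e2 : ‖(1 - s) * q ^ (2*M+2*d+3) * x‖ ≤ (1 + ‖s‖) * ‖x‖ := by
              rw [norm_mul, norm_mul, norm_pow]
              have : ‖q‖ ^ (2*M+2*d+3) ≤ 1 := pow_le_one₀ (norm_nonneg q) hq.le
              calc ‖1 - s‖ * ‖q‖ ^ (2*M+2*d+3) * ‖x‖ ≤ ‖1 - s‖ * 1 * ‖x‖ := by
                    apply mul_le_mul_of_nonneg_right _ (norm_nonneg x)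
                    exact mul_le_mul_of_nonneg_left this (norm_nonneg _)
                _ = ‖1 - s‖ * ‖x‖ := by ring
                _ ≤ (1 + ‖s‖) * ‖x‖ := mul_le_mul_of_nonneg_right e1 (norm_nonneg x)
            have e3 : ‖s * q ^ (4*M+4*d+8) * x^2‖ ≤ ‖s‖ * ‖x‖^2 := by
              rw [norm_mul, norm_mul, norm_pow, norm_pow]
              have : ‖q‖ ^ (4*M+4*d+8) ≤ 1 := pow_le_one₀ (norm_nonneg q) hq.le
              calc ‖s‖ * ‖q‖ ^ (4*M+4*d+8) * ‖x‖^2 ≤ ‖s‖ * 1 * ‖x‖^2 := by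
                    apply mul_le_mul_of_nonneg_right _ (by positivity)
                    exact mul_le_mul_of_nonneg_left this (norm_nonneg _)
                _ = ‖s‖ * ‖x‖^2 := by ring
            linarith
    · exact norm_nonneg _
    · positivity
  have hsu' : Summable (fun d => u (d+1)) := (summable_nat_add_iff 1).2 hsu
  have hT0 : Summable (fun d : ℕ => q ^ (d*(d+2) + 2*d*M) * x ^ d) := summable_Th_term q x hq M
  have hT2 : Summable (fun d : ℕ => q ^ (d*(d+2) + 2*d*(M+2)) * x ^ d) :=
    summable_Th_term q x hq (M+2)
  have hT3 : Summable (fun d : ℕ => q ^ (d*(d+2) + 2*d*(M+3)) * x ^ d) :=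
    summable_Th_term q x hq (M+3)
  have step1 : (1 - s) * Th q x M - q ^ (4*M+8) * x^2 * Th q x (M+2)
      + s * q ^ (6*M+15) * x^3 * Th q x (M+3)
      = ∑' d : ℕ, ((1 - s) * (q ^ (d*(d+2) + 2*d*M) * x ^ d)
        - q ^ (4*M+8) * x^2 * (q ^ (d*(d+2) + 2*d*(M+2)) * x ^ d)
        + s * q ^ (6*M+15) * x^3 * (q ^ (d*(d+2) + 2*d*(M+3)) * x ^ d)) := by
    rw [Summable.tsum_add (Summable.sub (hT0.mul_left _) (hT2.mul_left _)) (hT3.mul_left _),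
        Summable.tsum_sub (hT0.mul_left _) (hT2.mul_left _),
        tsum_mul_left, tsum_mul_left, tsum_mul_left]
    rfl
  rw [step1]
  have step2 : ∑' d : ℕ, ((1 - s) * (q ^ (d*(d+2) + 2*d*M) * x ^ d)
        - q ^ (4*M+8) * x^2 * (q ^ (d*(d+2) + 2*d*(M+2)) * x ^ d)
        + s * q ^ (6*M+15) * x^3 * (q ^ (d*(d+2) + 2*d*(M+3)) * x ^ d))
      = ∑' d : ℕ, (u d - u (d+1)) := tsum_congr hterm
  rw [step2, Summable.tsum_sub hsu hsu', Summable.tsum_eq_zero_add hsu]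
  have hu0 : u 0 = (1 - s) + (1 - s) * q ^ (2*M+3) * x - s * q ^ (4*M+8) * x^2 := by
    simp only [hu]
    norm_num
  rw [hu0]
  ring

lemma prod_one_sub_ge (f : ℕ → ℝ) (h0 : ∀ m, 0 ≤ f m) (h1 : ∀ m, f m ≤ 1) (s : Finset ℕ) :
    1 - ∑ m ∈ s, f m ≤ ∏ m ∈ s, (1 - f m) := by
  classical
  refine Finset.induction_on s ?_ ?_
  · simp
  · intro a s ha ih
    rw [Finset.prod_insert ha, Finset.sum_insert ha]
    have hs0 : 0 ≤ ∑ m ∈ s, f m := Finset.sum_nonneg fun m _ => h0 m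
    calc 1 - (f a + ∑ m ∈ s, f m) ≤ (1 - f a) * (1 - ∑ m ∈ s, f m) := by nlinarith [h0 a, h1 a]
      _ ≤ (1 - f a) * ∏ m ∈ s, (1 - f m) := by
          apply mul_le_mul_of_nonneg_left ih
          linarith [h1 a]

lemma poch_lb (q : ℂ) (hq : ‖q‖ < 1) :
    ∃ K : ℝ, 0 < K ∧ ∀ (s n : ℕ), s ≠ 0 → K ≤ ‖qPoch (q^s) (q^s) n‖ := by
  set c := ‖q‖ with hc
  have hc0 : 0 ≤ c := norm_nonneg q
  have h1c : (0:ℝ) < 1 - c := by linarith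
  obtain ⟨m₀, hm₀⟩ := exists_pow_lt_of_lt_one (show (0:ℝ) < (1-c)/2 by linarith) hq
  have hfacpos : ∀ m : ℕ, 0 < 1 - c ^ (m+1) := by
    intro m
    have : c ^ (m+1) < 1 := pow_lt_one₀ hc0 hq (by omega)
    linarith
  set P : ℕ → ℝ := fun n => ∏ m ∈ Finset.range n, (1 - c ^ (m+1)) with hP
  have hPpos : ∀ n, 0 < P n := fun n => Finset.prod_pos fun m _ => hfacpos m
  have hPmono : ∀ a t : ℕ, P (a + t) ≤ P a := by
    intro a t
    have h2 : ∏ i ∈ Finset.range t, (1 - c ^ (a + i + 1)) ≤ 1 := by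
      apply Finset.prod_le_one (fun m _ => (hfacpos _).le)
      intro m _
      have : 0 ≤ c ^ (a + m + 1) := pow_nonneg hc0 _
      linarith
    have hsplit : P (a + t) = P a * ∏ i ∈ Finset.range t, (1 - c ^ (a + i + 1)) := by
      rw [hP]
      simp only []
      rw [Finset.prod_range_add]
    rw [hsplit]
    calc P a * ∏ i ∈ Finset.range t, (1 - c ^ (a + i + 1)) ≤ P a * 1 :=
          mul_le_mul_of_nonneg_left h2 (hPpos a).le
      _ = P a := mul_one _
  have htail : ∀ t : ℕ, (1:ℝ)/2 ≤ ∏ i ∈ Finset.range t, (1 - c ^ (m₀ + i + 1)) := by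
    intro t
    have hW := prod_one_sub_ge (fun i => c ^ (m₀ + i + 1))
      (fun m => pow_nonneg hc0 _)
      (fun m => by
        have : c ^ (m₀ + m + 1) < 1 := pow_lt_one₀ hc0 hq (by omega)
        linarith)
      (Finset.range t)
    have hsum : ∑ i ∈ Finset.range t, c ^ (m₀ + i + 1) ≤ 1/2 := by
      have h1 : ∀ i : ℕ, c ^ (m₀ + i + 1) = c ^ (m₀ + 1) * c ^ i := fun i => by
        rw [← pow_add]; congr 1; omega
      have h2 : ∑ i ∈ Finset.range t, c ^ (m₀ + i + 1)
          = c ^ (m₀ + 1) * ∑ i ∈ Finset.range t, c ^ i := by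
        rw [Finset.mul_sum]
        exact Finset.sum_congr rfl fun i _ => h1 i
      rw [h2]
      have hgeo : ∑ i ∈ Finset.range t, c ^ i ≤ (1 - c)⁻¹ := by
        have hsummable : Summable (fun i : ℕ => c ^ i) := summable_geometric_of_lt_one hc0 hq
        calc ∑ i ∈ Finset.range t, c ^ i ≤ ∑' i : ℕ, c ^ i :=
              Summable.sum_le_tsum _ (fun i _ => pow_nonneg hc0 _) hsummable
          _ = (1 - c)⁻¹ := tsum_geometric_of_lt_one hc0 hq
      have hcm : c ^ (m₀ + 1) ≤ c ^ m₀ := by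
        rw [pow_succ]
        nlinarith [pow_nonneg hc0 m₀]
      have hinvpos : (0:ℝ) < (1 - c)⁻¹ := inv_pos.2 h1c
      have hfin : ((1-c)/2) * (1 - c)⁻¹ = 1/2 := by
        rw [div_mul_eq_mul_div, mul_comm, inv_mul_cancel₀ h1c.ne']
      calc c ^ (m₀ + 1) * ∑ i ∈ Finset.range t, c ^ i
          ≤ c ^ (m₀ + 1) * (1 - c)⁻¹ :=
            mul_le_mul_of_nonneg_left hgeo (pow_nonneg hc0 _)
        _ ≤ c ^ m₀ * (1 - c)⁻¹ := mul_le_mul_of_nonneg_right hcm hinvpos.le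
        _ ≤ ((1-c)/2) * (1 - c)⁻¹ := mul_le_mul_of_nonneg_right hm₀.le hinvpos.le
        _ = 1/2 := hfin
    linarith
  refine ⟨P m₀ * (1/2), by have := hPpos m₀; linarith, ?_⟩
  have hKey : ∀ n : ℕ, P m₀ * (1/2) ≤ P n := by
    intro n
    rcases le_or_gt n m₀ with h | h
    · obtain ⟨t, ht⟩ := Nat.exists_eq_add_of_le h
      calc P m₀ * (1/2) ≤ P m₀ * 1 :=
            mul_le_mul_of_nonneg_left (by norm_num) (hPpos m₀).le
        _ = P m₀ := mul_one _
        _ = P (n + t) := by rw [ht]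
        _ ≤ P n := hPmono n t
    · obtain ⟨t, rfl⟩ := Nat.exists_eq_add_of_le h.le
      have hsplit : P (m₀ + t) = P m₀ * ∏ i ∈ Finset.range t, (1 - c ^ (m₀ + i + 1)) := by
        rw [hP]
        simp only []
        rw [Finset.prod_range_add]
      rw [hsplit]
      exact mul_le_mul_of_nonneg_left (htail t) (hPpos m₀).le
  intro s n hs
  have hterm : ∀ m : ℕ, (1 - c ^ (m+1)) ≤ ‖(1 : ℂ) - q^s * (q^s)^m‖ := by
    intro m
    have h1 : ‖q^s * (q^s)^m‖ = c ^ (s*(m+1)) := by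
      simp only [norm_mul, norm_pow]
      rw [← pow_mul, ← pow_add]
      congr 1
      ring
    have h2 : c ^ (s*(m+1)) ≤ c ^ (m+1) := by
      apply pow_le_pow_of_le_one hc0 hq.le
      calc m + 1 = 1 * (m+1) := by ring
        _ ≤ s * (m+1) := Nat.mul_le_mul_right _ (Nat.one_le_iff_ne_zero.2 hs)
    calc 1 - c ^ (m+1) ≤ 1 - c ^ (s*(m+1)) := by linarith
      _ ≤ ‖(1 : ℂ)‖ - ‖q^s * (q^s)^m‖ := by rw [norm_one, h1]
      _ ≤ ‖(1 : ℂ) - q^s * (q^s)^m‖ := norm_sub_norm_le _ _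
  calc P m₀ * (1/2) ≤ P n := hKey n
    _ ≤ ∏ m ∈ Finset.range n, ‖(1 : ℂ) - q^s * (q^s)^m‖ :=
        Finset.prod_le_prod (fun m _ => (hfacpos m).le) (fun m _ => hterm m)
    _ = ‖qPoch (q^s) (q^s) n‖ := by rw [qPoch, norm_prod]

lemma E3_ge (i j k : ℕ) : i^2 + (j^2 + k^2) ≤ E3 (i,j,k) := by
  have h1 : j^2 ≤ 4*j^2 := Nat.le_mul_of_pos_left _ (by norm_num)
  have h2 : k^2 ≤ 12*k^2 := Nat.le_mul_of_pos_left _ (by norm_num)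
  have h3 : i^2 + (j^2 + k^2) ≤ i^2 + 4*j^2 + 12*k^2 := by
    calc i^2 + (j^2 + k^2) = i^2 + j^2 + k^2 := by ring
      _ ≤ i^2 + 4*j^2 + 12*k^2 := Nat.add_le_add (Nat.add_le_add le_rfl h1) h2
  apply le_trans h3
  simp only [E3]
  exact le_trans (Nat.le_add_right _ _) (le_trans (Nat.le_add_right _ _)
    (le_trans (Nat.le_add_right _ _) (le_trans (Nat.le_add_right _ _) (Nat.le_add_right _ _))))

set_option maxHeartbeats 1000000 in
lemma master3 (q x : ℂ) (hq : ‖q‖ < 1) (P : ℕ×ℕ×ℕ → ℂ) (C : ℝ)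
    (hC : 0 ≤ C) (hP : ∀ p, ‖P p‖ ≤ C) : Summable (fun p => P p * F q x p) := by
  obtain ⟨K, hK, hKle⟩ := poch_lb q hq
  have hc0 : (0:ℝ) ≤ ‖q‖ := norm_nonneg q
  have hB1 : (1:ℝ) ≤ max 1 ‖x‖ := le_max_left _ _
  have hB0 : (0:ℝ) ≤ max 1 ‖x‖ := by linarith
  set c := ‖q‖ with hcdef
  set B := max 1 ‖x‖ with hBdef
  have su : Summable (fun n : ℕ => c ^ (n^2) * B ^ n) := key1 hc0 hq hB0
  have sv : Summable (fun n : ℕ => c ^ (n^2) * (B^2) ^ n) := key1 hc0 hq (by positivity)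
  have sw : Summable (fun n : ℕ => c ^ (n^2) * (B^3) ^ n) := key1 hc0 hq (by positivity)
  have svw : Summable (fun r : ℕ×ℕ => (c ^ (r.1^2) * (B^2)^r.1) * (c ^ (r.2^2) * (B^3)^r.2)) :=
    sv.mul_of_nonneg sw (fun n => by positivity) (fun n => by positivity)
  have suvw : Summable (fun p : ℕ×ℕ×ℕ => (c ^ (p.1^2) * B^p.1) *
      ((c ^ (p.2.1^2) * (B^2)^p.2.1) * (c ^ (p.2.2^2) * (B^3)^p.2.2))) :=
    su.mul_of_nonneg svw (fun n => by positivity) (fun r => by positivity)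
  have hgsum : Summable (fun p : ℕ×ℕ×ℕ => (C * (K⁻¹*K⁻¹*K⁻¹)) * ((c ^ (p.1^2) * B^p.1) *
      ((c ^ (p.2.1^2) * (B^2)^p.2.1) * (c ^ (p.2.2^2) * (B^3)^p.2.2)))) :=
    suvw.mul_left _
  apply Summable.of_norm_bounded hgsum
  intro p
  obtain ⟨i, j, k⟩ := p
  have hden1 : K ≤ ‖qPoch q q i‖ := by
    have := hKle 1 i one_ne_zero
    simpa using this
  have hden2 : K ≤ ‖qPoch (q^4) (q^4) j‖ := hKle 4 j (by norm_num)
  have hden3 : K ≤ ‖qPoch (q^6) (q^6) k‖ := hKle 6 k (by norm_num)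
  have hD : K*(K*K) ≤ ‖qPoch q q i * qPoch (q^4) (q^4) j * qPoch (q^6) (q^6) k‖ := by
    rw [norm_mul, norm_mul]
    have h23 : K*K ≤ ‖qPoch (q^4) (q^4) j‖ * ‖qPoch (q^6) (q^6) k‖ :=
      mul_le_mul hden2 hden3 hK.le (norm_nonneg _)
    calc K*(K*K) ≤ K * (‖qPoch (q^4) (q^4) j‖ * ‖qPoch (q^6) (q^6) k‖) :=
          mul_le_mul_of_nonneg_left h23 hK.le
      _ = K * ‖qPoch (q^4) (q^4) j‖ * ‖qPoch (q^6) (q^6) k‖ := by ring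
      _ ≤ ‖qPoch q q i‖ * ‖qPoch (q^4) (q^4) j‖ * ‖qPoch (q^6) (q^6) k‖ := by
          apply mul_le_mul_of_nonneg_right _ (norm_nonneg _)
          exact mul_le_mul_of_nonneg_right hden1 (norm_nonneg _)
  have hnum : ‖(-1:ℂ)^k * q^(E3 (i,j,k))‖ = c^(E3 (i,j,k)) := by
    rw [norm_mul, norm_pow, norm_pow, norm_neg, norm_one, one_pow, one_mul]
  have hxN : ‖x‖^(N3 (i,j,k)) ≤ B^i * ((B^2)^j * (B^3)^k) := by
    have h1 : ‖x‖^(N3 (i,j,k)) ≤ B^(N3 (i,j,k)) :=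
      pow_le_pow_left₀ (norm_nonneg x) (le_max_right 1 ‖x‖) _
    have h2 : B^(N3 (i,j,k)) = B^i * ((B^2)^j * (B^3)^k) := by
      simp only [N3]
      rw [pow_add, pow_add, pow_mul, pow_mul]
      ring
    rw [h2] at h1
    exact h1
  have hE : c^(E3 (i,j,k)) ≤ c^(i^2) * (c^(j^2) * c^(k^2)) := by
    rw [← pow_add, ← pow_add]
    exact pow_le_pow_of_le_one hc0 hq.le (by
      have h := E3_ge i j k
      calc i^2 + (j^2 + k^2) ≤ E3 (i,j,k) := h)
  have hKKK : (0:ℝ) < K*(K*K) := by positivity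
  have hFnorm : ‖F q x (i,j,k)‖
      = c^(E3 (i,j,k)) / ‖qPoch q q i * qPoch (q^4) (q^4) j * qPoch (q^6) (q^6) k‖
        * ‖x‖^(N3 (i,j,k)) := by
    rw [F, norm_mul, norm_div, hnum, norm_pow]
  have hF : ‖F q x (i,j,k)‖ ≤ (K⁻¹*(K⁻¹*K⁻¹)) * ((c ^ (i^2) * B^i) *
      ((c ^ (j^2) * (B^2)^j) * (c ^ (k^2) * (B^3)^k))) := by
    rw [hFnorm]
    have hdiv : c^(E3 (i,j,k)) / ‖qPoch q q i * qPoch (q^4) (q^4) j * qPoch (q^6) (q^6) k‖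
        ≤ c^(E3 (i,j,k)) / (K*(K*K)) :=
      div_le_div_of_nonneg_left (by positivity) hKKK hD
    calc c^(E3 (i,j,k)) / ‖qPoch q q i * qPoch (q^4) (q^4) j * qPoch (q^6) (q^6) k‖
          * ‖x‖^(N3 (i,j,k))
        ≤ c^(E3 (i,j,k)) / (K*(K*K)) * ‖x‖^(N3 (i,j,k)) := by
          apply mul_le_mul_of_nonneg_right hdiv (by positivity)
      _ ≤ (c^(i^2) * (c^(j^2) * c^(k^2))) / (K*(K*K)) * (B^i * ((B^2)^j * (B^3)^k)) := by
          apply mul_le_mul ((div_le_div_iff_of_pos_right hKKK).2 hE) hxN (by positivity) (by positivity)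
      _ = (K⁻¹*(K⁻¹*K⁻¹)) * ((c ^ (i^2) * B^i) *
            ((c ^ (j^2) * (B^2)^j) * (c ^ (k^2) * (B^3)^k))) := by
          field_simp
  calc ‖P (i,j,k) * F q x (i,j,k)‖ = ‖P (i,j,k)‖ * ‖F q x (i,j,k)‖ := norm_mul _ _
    _ ≤ C * ((K⁻¹*(K⁻¹*K⁻¹)) * ((c ^ (i^2) * B^i) *
        ((c ^ (j^2) * (B^2)^j) * (c ^ (k^2) * (B^3)^k)))) :=
        mul_le_mul (hP _) hF (norm_nonneg _) hC
    _ = (C * (K⁻¹*K⁻¹*K⁻¹)) * ((c ^ (i^2) * B^i) *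
        ((c ^ (j^2) * (B^2)^j) * (c ^ (k^2) * (B^3)^k))) := by ring

noncomputable def Af (q x : ℂ) (p : ℕ×ℕ×ℕ) : ℂ :=
  (1 + q ^ p.1) + q^2 * x * q^(2*N3 p) * (q + q * q^p.1 - 1) - q^7 * x^2 * q^(4*N3 p)

lemma cert (q x : ℂ) (hq : ‖q‖ < 1) (i j k : ℕ) :
    1 - (1 + q*x + q^2*x - q^3*x) * q^(2*(i+2*j+3*k))
      - q^3*x*(1 - q^2*x + q^3*x + q^4*x) * q^(4*(i+2*j+3*k))
      + q^8*x^2*(q^4*x - 1) * q^(6*(i+2*j+3*k))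
    = (Af q x (i,j,k) * (1 - q^i) - Af q x (i+1,j,k) * (q^(2*(i+2*j+3*k)+1) * x))
      + (((q^(2*i) * Th q x (i+2*j+3*k)) * (1 - (q^4)^j)
          - (q^(2*i) * Th q x (i+2*j+3*k+2)) * (q^(4*(i+2*j+3*k)+8) * x^2))
      + ((q^(2*i+4*j) * Th q x (i+2*j+3*k)) * (1 - (q^6)^k)
          + (q^(2*i+4*j) * Th q x (i+2*j+3*k+3)) * (q^(6*(i+2*j+3*k)+6*k+15) * x^3))) := by
  have h := Th_comb q x hq (q^(4*j+6*k)) (i+2*j+3*k)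
  simp only [Af, N3]
  linear_combination (-(q^(2*i))) * h

lemma tsum_shift1 (q x : ℂ) (hq : ‖q‖ < 1) (A : ℕ×ℕ×ℕ → ℂ) :
    ∑' p : ℕ×ℕ×ℕ, A (p.1+1, p.2.1, p.2.2) * (q^(2*N3 p+1) * x) * F q x p
      = ∑' p : ℕ×ℕ×ℕ, A p * (1 - q^p.1) * F q x p := by
  have hinj : Function.Injective (fun p : ℕ×ℕ×ℕ => ((p.1+1, p.2.1, p.2.2) : ℕ×ℕ×ℕ)) := by
    intro a b h
    simp only [Prod.mk.injEq] at h
    obtain ⟨h1, h2, h3⟩ := h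
    exact Prod.ext (by omega) (Prod.ext h2 h3)
  have hsupp : Function.support (fun p : ℕ×ℕ×ℕ => A p * (1 - q^p.1) * F q x p)
      ⊆ Set.range (fun p : ℕ×ℕ×ℕ => ((p.1+1, p.2.1, p.2.2) : ℕ×ℕ×ℕ)) := by
    intro p hp
    rcases p with ⟨i, j, k⟩
    cases i with
    | zero =>
      exfalso
      apply hp
      simp
    | succ m => exact ⟨(m, j, k), rfl⟩
  have key := Function.Injective.tsum_eq hinj
    (f := fun p : ℕ×ℕ×ℕ => A p * (1 - q^p.1) * F q x p) hsupp
  rw [← key]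
  apply tsum_congr
  intro p
  rcases p with ⟨i, j, k⟩
  simp only [N3]
  have h := rel1 q x hq i j k
  calc A (i+1,j,k) * (q^(2*(i+2*j+3*k)+1) * x) * F q x (i,j,k)
      = A (i+1,j,k) * (q^(2*(i+2*j+3*k)+1) * x * F q x (i,j,k)) := by ring
    _ = A (i+1,j,k) * ((1 - q^(i+1)) * F q x (i+1,j,k)) := by rw [← h]
    _ = A (i+1,j,k) * (1 - q^(i+1)) * F q x (i+1,j,k) := by ring

lemma tsum_shift2 (q x : ℂ) (hq : ‖q‖ < 1) (A : ℕ×ℕ×ℕ → ℂ) :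
    ∑' p : ℕ×ℕ×ℕ, A (p.1, p.2.1+1, p.2.2) * (q^(4*N3 p+8) * x^2) * F q x p
      = ∑' p : ℕ×ℕ×ℕ, A p * (1 - (q^4)^p.2.1) * F q x p := by
  have hinj : Function.Injective (fun p : ℕ×ℕ×ℕ => ((p.1, p.2.1+1, p.2.2) : ℕ×ℕ×ℕ)) := by
    intro a b h
    simp only [Prod.mk.injEq] at h
    obtain ⟨h1, h2, h3⟩ := h
    exact Prod.ext h1 (Prod.ext (by omega) h3)
  have hsupp : Function.support (fun p : ℕ×ℕ×ℕ => A p * (1 - (q^4)^p.2.1) * F q x p)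
      ⊆ Set.range (fun p : ℕ×ℕ×ℕ => ((p.1, p.2.1+1, p.2.2) : ℕ×ℕ×ℕ)) := by
    intro p hp
    rcases p with ⟨i, j, k⟩
    cases j with
    | zero =>
      exfalso
      apply hp
      simp
    | succ m => exact ⟨(i, m, k), rfl⟩
  have key := Function.Injective.tsum_eq hinj
    (f := fun p : ℕ×ℕ×ℕ => A p * (1 - (q^4)^p.2.1) * F q x p) hsupp
  rw [← key]
  apply tsum_congr
  intro p
  rcases p with ⟨i, j, k⟩
  simp only [N3]
  have h := rel2 q x hq i j k
  calc A (i,j+1,k) * (q^(4*(i+2*j+3*k)+8) * x^2) * F q x (i,j,k)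
      = A (i,j+1,k) * (q^(4*(i+2*j+3*k)+8) * x^2 * F q x (i,j,k)) := by ring
    _ = A (i,j+1,k) * ((1 - (q^4)^(j+1)) * F q x (i,j+1,k)) := by rw [← h]
    _ = A (i,j+1,k) * (1 - (q^4)^(j+1)) * F q x (i,j+1,k) := by ring

lemma tsum_shift3 (q x : ℂ) (hq : ‖q‖ < 1) (A : ℕ×ℕ×ℕ → ℂ) :
    ∑' p : ℕ×ℕ×ℕ, A (p.1, p.2.1, p.2.2+1) * (q^(6*N3 p+6*p.2.2+15) * x^3) * F q x p
      = - ∑' p : ℕ×ℕ×ℕ, A p * (1 - (q^6)^p.2.2) * F q x p := by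
  have hinj : Function.Injective (fun p : ℕ×ℕ×ℕ => ((p.1, p.2.1, p.2.2+1) : ℕ×ℕ×ℕ)) := by
    intro a b h
    simp only [Prod.mk.injEq] at h
    obtain ⟨h1, h2, h3⟩ := h
    exact Prod.ext h1 (Prod.ext h2 (by omega))
  have hsupp : Function.support (fun p : ℕ×ℕ×ℕ => A p * (1 - (q^6)^p.2.2) * F q x p)
      ⊆ Set.range (fun p : ℕ×ℕ×ℕ => ((p.1, p.2.1, p.2.2+1) : ℕ×ℕ×ℕ)) := by
    intro p hp
    rcases p with ⟨i, j, k⟩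
    cases k with
    | zero =>
      exfalso
      apply hp
      simp
    | succ m => exact ⟨(i, j, m), rfl⟩
  have key := Function.Injective.tsum_eq hinj
    (f := fun p : ℕ×ℕ×ℕ => A p * (1 - (q^6)^p.2.2) * F q x p) hsupp
  rw [← key, ← tsum_neg]
  apply tsum_congr
  intro p
  rcases p with ⟨i, j, k⟩
  simp only [N3]
  have h := rel3 q x hq i j k
  calc A (i,j,k+1) * (q^(6*(i+2*j+3*k)+6*k+15) * x^3) * F q x (i,j,k)
      = -(A (i,j,k+1) * (-(q^(6*(i+2*j+3*k)+6*k+15) * x^3 * F q x (i,j,k)))) := by ring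
    _ = -(A (i,j,k+1) * ((1 - (q^6)^(k+1)) * F q x (i,j,k+1))) := by rw [← h]
    _ = -(A (i,j,k+1) * (1 - (q^6)^(k+1)) * F q x (i,j,k+1)) := by ring

lemma norm_qpow_mul (q : ℂ) (hq : ‖q‖ < 1) (e : ℕ) (z : ℂ) : ‖q^e * z‖ ≤ ‖z‖ := by
  rw [norm_mul]
  apply mul_le_of_le_one_left (norm_nonneg z)
  rw [norm_pow]
  exact pow_le_one₀ (norm_nonneg q) hq.le

lemma norm_one_sub_pow_le (z : ℂ) (hz : ‖z‖ ≤ 1) (n : ℕ) : ‖(1:ℂ) - z^n‖ ≤ 2 := by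
  calc ‖(1:ℂ) - z^n‖ ≤ ‖(1:ℂ)‖ + ‖z^n‖ := norm_sub_le _ _
    _ ≤ 1 + 1 := by
        rw [norm_one, norm_pow]
        have : ‖z‖^n ≤ 1 := pow_le_one₀ (norm_nonneg z) hz
        linarith
    _ = 2 := by norm_num

lemma Af_le (q x : ℂ) (hq : ‖q‖ < 1) (p : ℕ×ℕ×ℕ) :
    ‖Af q x p‖ ≤ 2 + 3*‖x‖ + ‖x‖^2 := by
  have hq1 : ‖q‖ ≤ 1 := hq.le
  have hqp : ∀ n : ℕ, ‖q^n‖ ≤ 1 := fun n => by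
    rw [norm_pow]; exact pow_le_one₀ (norm_nonneg q) hq1
  have h1 : ‖(1:ℂ) + q^p.1‖ ≤ 2 := by
    calc ‖(1:ℂ) + q^p.1‖ ≤ ‖(1:ℂ)‖ + ‖q^p.1‖ := norm_add_le _ _
      _ ≤ 1 + 1 := by rw [norm_one]; linarith [hqp p.1]
      _ = 2 := by norm_num
  have hin : ‖q + q * q^p.1 - 1‖ ≤ 3 := by
    calc ‖q + q * q^p.1 - 1‖ ≤ ‖q + q * q^p.1‖ + ‖(1:ℂ)‖ := norm_sub_le _ _
      _ ≤ ‖q‖ + ‖q * q^p.1‖ + 1 := by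
          rw [norm_one]
          linarith [norm_add_le q (q * q^p.1)]
      _ ≤ 1 + 1 + 1 := by
          have h3 : ‖q * q^p.1‖ ≤ 1 := by
            rw [norm_mul]
            calc ‖q‖ * ‖q^p.1‖ ≤ 1 * 1 :=
              mul_le_mul hq1 (hqp p.1) (norm_nonneg _) (by norm_num)
              _ = 1 := by norm_num
          linarith
      _ = 3 := by norm_num
  have h2 : ‖q^2 * x * q^(2*N3 p) * (q + q * q^p.1 - 1)‖ ≤ 3 * ‖x‖ := by
    rw [norm_mul, norm_mul, norm_mul]
    calc ‖q^2‖ * ‖x‖ * ‖q^(2*N3 p)‖ * ‖q + q * q^p.1 - 1‖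
        ≤ 1 * ‖x‖ * 1 * 3 := by
          apply mul_le_mul
          · apply mul_le_mul
            · apply mul_le_mul (hqp 2) le_rfl (norm_nonneg x) (by norm_num)
            · exact hqp _
            · exact norm_nonneg _
            · positivity
          · exact hin
          · exact norm_nonneg _
          · positivity
      _ = 3 * ‖x‖ := by ring
  have h3 : ‖q^7 * x^2 * q^(4*N3 p)‖ ≤ ‖x‖^2 := by
    simp only [norm_mul, norm_pow]
    calc ‖q‖^7 * ‖x‖^2 * ‖q‖^(4*N3 p) ≤ 1 * ‖x‖^2 * 1 := by
          apply mul_le_mul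
          · exact mul_le_mul (pow_le_one₀ (norm_nonneg q) hq1) le_rfl (by positivity)
              (by norm_num)
          · exact pow_le_one₀ (norm_nonneg q) hq1
          · positivity
          · positivity
      _ = ‖x‖^2 := by ring
  calc ‖Af q x p‖
      ≤ ‖(1 + q^p.1) + q^2 * x * q^(2*N3 p) * (q + q * q^p.1 - 1)‖ + ‖q^7 * x^2 * q^(4*N3 p)‖ := by
        apply norm_sub_le
    _ ≤ (‖(1:ℂ) + q^p.1‖ + ‖q^2 * x * q^(2*N3 p) * (q + q * q^p.1 - 1)‖)
        + ‖q^7 * x^2 * q^(4*N3 p)‖ := by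
        have := norm_add_le ((1:ℂ) + q^p.1) (q^2 * x * q^(2*N3 p) * (q + q * q^p.1 - 1))
        linarith
    _ ≤ (2 + 3*‖x‖) + ‖x‖^2 := by linarith
    _ = 2 + 3*‖x‖ + ‖x‖^2 := by ring

end KRaux

open KRaux in
/-- The `q`-shift equation satisfied by `H₁(x)`:
`H₁(x) - (1 + qx + q²x - q³x) H₁(q²x) - q³x (1 - q²x + q³x + q⁴x) H₁(q⁴x)
  + q⁸x² (q⁴x - 1) H₁(q⁶x) = 0`. -/
theorem H1_q_shift_equation (q : ℂ) (hq : ‖q‖ < 1) (x : ℂ) :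
    H1 q x - (1 + q * x + q ^ 2 * x - q ^ 3 * x) * H1 q (q ^ 2 * x)
      - q ^ 3 * x * (1 - q ^ 2 * x + q ^ 3 * x + q ^ 4 * x) * H1 q (q ^ 4 * x)
      + q ^ 8 * x ^ 2 * (q ^ 4 * x - 1) * H1 q (q ^ 6 * x) = 0 := by
  have hq' : ‖q‖ < 1 := by exact hq
  have ht : ∀ t : ℕ, H1 q (q^t * x) = ∑' p : ℕ×ℕ×ℕ, q^(t*N3 p) * F q x p := by
    intro t
    rw [H1_eq]
    apply tsum_congr
    intro p
    simp only [F]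
    rw [mul_pow, ← pow_mul]
    ring
  have h0 : H1 q x = ∑' p : ℕ×ℕ×ℕ, F q x p := H1_eq q x
  have h2 : H1 q (q^2 * x) = ∑' p : ℕ×ℕ×ℕ, q^(2*N3 p) * F q x p := ht 2
  have h4 : H1 q (q^4 * x) = ∑' p : ℕ×ℕ×ℕ, q^(4*N3 p) * F q x p := ht 4
  have h6 : H1 q (q^6 * x) = ∑' p : ℕ×ℕ×ℕ, q^(6*N3 p) * F q x p := ht 6
  -- summability
  have s0 : Summable (fun p : ℕ×ℕ×ℕ => F q x p) :=
    (master3 q x hq' (fun _ => 1) 1 zero_le_one (fun p => by simp)).congr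
      (fun p => one_mul _)
  have st : ∀ t : ℕ, Summable (fun p : ℕ×ℕ×ℕ => q^(t*N3 p) * F q x p) := fun t =>
    master3 q x hq' _ 1 zero_le_one
      (fun p => by rw [norm_pow]; exact pow_le_one₀ (norm_nonneg q) hq'.le)
  obtain ⟨CT, hCT0, hCT⟩ := Th_bound q x hq'
  have hThCoef : ∀ (a M : ℕ), ‖q^a * Th q x M‖ ≤ CT := fun a M =>
    le_trans (norm_qpow_mul q hq' a _) (hCT M)
  have hq41 : ‖q^4‖ ≤ 1 := by rw [norm_pow]; exact pow_le_one₀ (norm_nonneg q) hq'.le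
  have hq61 : ‖q^6‖ ≤ 1 := by rw [norm_pow]; exact pow_le_one₀ (norm_nonneg q) hq'.le
  have sG1 : Summable (fun p : ℕ×ℕ×ℕ => Af q x p * (1 - q^p.1) * F q x p) :=
    master3 q x hq' (fun p => Af q x p * (1 - q^p.1)) ((2+3*‖x‖+‖x‖^2)*2) (by positivity)
      (fun p => by
        rw [norm_mul]
        exact mul_le_mul (Af_le q x hq' p) (norm_one_sub_pow_le q hq'.le p.1)
          (norm_nonneg _) (by positivity))
  have sG1' : Summable (fun p : ℕ×ℕ×ℕ =>
      Af q x (p.1+1, p.2.1, p.2.2) * (q^(2*N3 p+1) * x) * F q x p) :=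
    master3 q x hq' (fun p => Af q x (p.1+1, p.2.1, p.2.2) * (q^(2*N3 p+1) * x))
      ((2+3*‖x‖+‖x‖^2)*‖x‖) (by positivity)
      (fun p => by
        rw [norm_mul]
        exact mul_le_mul (Af_le q x hq' _) (norm_qpow_mul q hq' _ x)
          (norm_nonneg _) (by positivity))
  have sG2 : Summable (fun p : ℕ×ℕ×ℕ =>
      (q^(2*p.1) * Th q x (N3 p)) * (1 - (q^4)^p.2.1) * F q x p) :=
    master3 q x hq' (fun p => (q^(2*p.1) * Th q x (N3 p)) * (1 - (q^4)^p.2.1)) (CT*2) (by positivity)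
      (fun p => by
        rw [norm_mul]
        exact mul_le_mul (hThCoef _ _) (norm_one_sub_pow_le (q^4) hq41 p.2.1)
          (norm_nonneg _) hCT0)
  have sG2' : Summable (fun p : ℕ×ℕ×ℕ =>
      (q^(2*p.1) * Th q x (N3 p+2)) * (q^(4*N3 p+8) * x^2) * F q x p) :=
    master3 q x hq' (fun p => (q^(2*p.1) * Th q x (N3 p+2)) * (q^(4*N3 p+8) * x^2))
      (CT*‖x^2‖) (by positivity)
      (fun p => by
        rw [norm_mul]
        exact mul_le_mul (hThCoef _ _) (norm_qpow_mul q hq' _ (x^2))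
          (norm_nonneg _) hCT0)
  have sG3 : Summable (fun p : ℕ×ℕ×ℕ =>
      (q^(2*p.1+4*p.2.1) * Th q x (N3 p)) * (1 - (q^6)^p.2.2) * F q x p) :=
    master3 q x hq' (fun p => (q^(2*p.1+4*p.2.1) * Th q x (N3 p)) * (1 - (q^6)^p.2.2))
      (CT*2) (by positivity)
      (fun p => by
        rw [norm_mul]
        exact mul_le_mul (hThCoef _ _) (norm_one_sub_pow_le (q^6) hq61 p.2.2)
          (norm_nonneg _) hCT0)
  have sG3' : Summable (fun p : ℕ×ℕ×ℕ =>
      (q^(2*p.1+4*p.2.1) * Th q x (N3 p+3)) * (q^(6*N3 p+6*p.2.2+15) * x^3) * F q x p) :=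
    master3 q x hq' (fun p => (q^(2*p.1+4*p.2.1) * Th q x (N3 p+3)) * (q^(6*N3 p+6*p.2.2+15) * x^3))
      (CT*‖x^3‖) (by positivity)
      (fun p => by
        rw [norm_mul]
        exact mul_le_mul (hThCoef _ _) (norm_qpow_mul q hq' _ (x^3))
          (norm_nonneg _) hCT0)
  -- the three telescoping sums vanish
  have hz1 : ∑' p : ℕ×ℕ×ℕ, (Af q x p * (1 - q^p.1) * F q x p
      - Af q x (p.1+1, p.2.1, p.2.2) * (q^(2*N3 p+1) * x) * F q x p) = 0 := by
    rw [Summable.tsum_sub sG1 sG1', tsum_shift1 q x hq' (Af q x), sub_self]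
  have hz2 : ∑' p : ℕ×ℕ×ℕ, ((q^(2*p.1) * Th q x (N3 p)) * (1 - (q^4)^p.2.1) * F q x p
      - (q^(2*p.1) * Th q x (N3 p+2)) * (q^(4*N3 p+8) * x^2) * F q x p) = 0 := by
    have e : ∀ p : ℕ×ℕ×ℕ, (q^(2*p.1) * Th q x (N3 p+2)) * (q^(4*N3 p+8) * x^2) * F q x p
        = (fun r : ℕ×ℕ×ℕ => q^(2*r.1) * Th q x (N3 r)) (p.1, p.2.1+1, p.2.2)
            * (q^(4*N3 p+8) * x^2) * F q x p := by
      intro p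
      have hN : N3 (p.1, p.2.1+1, p.2.2) = N3 p + 2 := by simp only [N3]; omega
      simp only [hN]
    rw [Summable.tsum_sub sG2 sG2',
      show (∑' p : ℕ×ℕ×ℕ, (q^(2*p.1) * Th q x (N3 p+2)) * (q^(4*N3 p+8) * x^2) * F q x p)
        = ∑' p : ℕ×ℕ×ℕ, (fun r : ℕ×ℕ×ℕ => q^(2*r.1) * Th q x (N3 r)) (p.1, p.2.1+1, p.2.2)
            * (q^(4*N3 p+8) * x^2) * F q x p from tsum_congr e,
      tsum_shift2 q x hq' (fun r => q^(2*r.1) * Th q x (N3 r)), sub_self]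
  have hz3 : ∑' p : ℕ×ℕ×ℕ, ((q^(2*p.1+4*p.2.1) * Th q x (N3 p)) * (1 - (q^6)^p.2.2) * F q x p
      + (q^(2*p.1+4*p.2.1) * Th q x (N3 p+3)) * (q^(6*N3 p+6*p.2.2+15) * x^3) * F q x p) = 0 := by
    have e : ∀ p : ℕ×ℕ×ℕ,
        (q^(2*p.1+4*p.2.1) * Th q x (N3 p+3)) * (q^(6*N3 p+6*p.2.2+15) * x^3) * F q x p
        = (fun r : ℕ×ℕ×ℕ => q^(2*r.1+4*r.2.1) * Th q x (N3 r)) (p.1, p.2.1, p.2.2+1)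
            * (q^(6*N3 p+6*p.2.2+15) * x^3) * F q x p := by
      intro p
      have hN : N3 (p.1, p.2.1, p.2.2+1) = N3 p + 3 := by simp only [N3]; omega
      simp only [hN]
    rw [Summable.tsum_add sG3 sG3',
      show (∑' p : ℕ×ℕ×ℕ,
          (q^(2*p.1+4*p.2.1) * Th q x (N3 p+3)) * (q^(6*N3 p+6*p.2.2+15) * x^3) * F q x p)
        = ∑' p : ℕ×ℕ×ℕ, (fun r : ℕ×ℕ×ℕ => q^(2*r.1+4*r.2.1) * Th q x (N3 r)) (p.1, p.2.1, p.2.2+1)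
            * (q^(6*N3 p+6*p.2.2+15) * x^3) * F q x p from tsum_congr e,
      tsum_shift3 q x hq' (fun r => q^(2*r.1+4*r.2.1) * Th q x (N3 r)), add_neg_cancel]
  -- pointwise certificate
  have hpt : ∀ p : ℕ×ℕ×ℕ,
      F q x p - (1 + q*x + q^2*x - q^3*x) * (q^(2*N3 p) * F q x p)
        - q^3*x*(1 - q^2*x + q^3*x + q^4*x) * (q^(4*N3 p) * F q x p)
        + q^8*x^2*(q^4*x - 1) * (q^(6*N3 p) * F q x p)
      = (Af q x p * (1 - q^p.1) * F q x p
          - Af q x (p.1+1, p.2.1, p.2.2) * (q^(2*N3 p+1) * x) * F q x p)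
        + (((q^(2*p.1) * Th q x (N3 p)) * (1 - (q^4)^p.2.1) * F q x p
            - (q^(2*p.1) * Th q x (N3 p+2)) * (q^(4*N3 p+8) * x^2) * F q x p)
          + ((q^(2*p.1+4*p.2.1) * Th q x (N3 p)) * (1 - (q^6)^p.2.2) * F q x p
            + (q^(2*p.1+4*p.2.1) * Th q x (N3 p+3)) * (q^(6*N3 p+6*p.2.2+15) * x^3) * F q x p)) := by
    intro p
    rcases p with ⟨i, j, k⟩
    have hc := cert q x hq' i j k
    simp only [N3]
    linear_combination (F q x (i,j,k)) * hc
  rw [h0, h2, h4, h6, ← tsum_mul_left, ← tsum_mul_left, ← tsum_mul_left,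
    ← Summable.tsum_sub s0 ((st 2).mul_left _),
    ← Summable.tsum_sub (s0.sub ((st 2).mul_left _)) ((st 4).mul_left _),
    ← Summable.tsum_add ((s0.sub ((st 2).mul_left _)).sub ((st 4).mul_left _)) ((st 6).mul_left _),
    tsum_congr hpt,
    Summable.tsum_add (sG1.sub sG1') ((sG2.sub sG2').add (sG3.add sG3')),
    Summable.tsum_add (sG2.sub sG2') (sG3.add sG3'), hz1, hz2, hz3]
  norm_num
end

section
/- Fix a complex number q with |q| < 1 and define, for x \in \mathbb{C}, \(RR(x) = \sum_{n\ge 0} \frac{q^{n^2} x^n}{(q;q)_n}\). Then for every x \in \mathbb{C}: \(RR(x) = RR(qx) + q x\, RR(q^2 x)\). -/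
/-- The Rogers–Ramanujan series `RR(x) = ∑_{n≥0} q^{n²} xⁿ / (q;q)_n`. -/
noncomputable def RR (q x : ℂ) : ℂ := ∑' n : ℕ, q ^ (n ^ 2) * x ^ n / qPoch q q n

lemma one_sub_ne (q : ℂ) (hq : ‖q‖ < 1) (m : ℕ) : 1 - q * q ^ m ≠ 0 := by
  intro h
  have h1 : q * q ^ m = 1 := by linear_combination -h
  have : ‖q * q ^ m‖ < 1 := by
    rw [norm_mul, norm_pow]
    calc ‖q‖ * ‖q‖ ^ m ≤ ‖q‖ * 1 := by
          exact mul_le_mul_of_nonneg_left (pow_le_one₀ (norm_nonneg q) hq.le)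
            (norm_nonneg q)
      _ < 1 := by simpa using hq
  rw [h1] at this; simp at this

lemma qPoch_ne_zero (q : ℂ) (hq : ‖q‖ < 1) (n : ℕ) : qPoch q q n ≠ 0 := by
  unfold qPoch
  rw [Finset.prod_ne_zero_iff]
  exact fun m _ => one_sub_ne q hq m

lemma RR_summable (q : ℂ) (hq : ‖q‖ < 1) (x : ℂ) :
    Summable (fun n : ℕ => q ^ (n ^ 2) * x ^ n / qPoch q q n) := by
  rcases eq_or_ne (q * x) 0 with h | h
  · -- q = 0 or x = 0 : terms vanish for n ≥ 1
    apply summable_of_ne_finset_zero (s := {0})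
    intro n hn
    have hn1 : 1 ≤ n := Nat.one_le_iff_ne_zero.mpr (by simpa using hn)
    rcases mul_eq_zero.mp h with h0 | h0
    · rw [h0]; simp [zero_pow (by positivity : n ^ 2 ≠ 0)]
    · rw [h0]; simp [zero_pow (Nat.one_le_iff_ne_zero.mp hn1)]
  · have hq0 : q ≠ 0 := fun h0 => h (by simp [h0])
    have hx0 : x ≠ 0 := fun h0 => h (by simp [h0])
    set f : ℕ → ℂ := fun n => q ^ (n ^ 2) * x ^ n / qPoch q q n with hf
    have hfne : ∀ n, f n ≠ 0 := by
      intro n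
      apply div_ne_zero (mul_ne_zero (pow_ne_zero _ hq0) (pow_ne_zero _ hx0))
        (qPoch_ne_zero q hq n)
    apply summable_of_ratio_test_tendsto_lt_one (l := 0) one_pos
      (Filter.Eventually.of_forall hfne)
    have hrat : ∀ n : ℕ, f (n + 1) = f n * (q ^ (2 * n + 1) * x / (1 - q * q ^ n)) := by
      intro n
      have hP := qPoch_ne_zero q hq n
      have hone := one_sub_ne q hq n
      rw [hf]
      simp only
      rw [show (n + 1) ^ 2 = n ^ 2 + (2 * n + 1) by ring]
      rw [show qPoch q q (n + 1) = qPoch q q n * (1 - q * q ^ n) from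
        Finset.prod_range_succ _ n]
      field_simp
      ring
    have heq : ∀ n : ℕ, ‖f (n + 1)‖ / ‖f n‖ = ‖q ^ (2 * n + 1) * x / (1 - q * q ^ n)‖ := by
      intro n
      rw [hrat n, norm_mul, mul_comm, mul_div_assoc, div_self (norm_ne_zero_iff.mpr (hfne n)), mul_one]
    rw [show (0 : ℝ) = ‖(0 : ℂ)‖ by simp]
    simp only [heq]
    apply Filter.Tendsto.norm
    have hnum : Filter.Tendsto (fun n : ℕ => q ^ (2 * n + 1) * x) Filter.atTop (nhds 0) := by
      have : Filter.Tendsto (fun n : ℕ => q * (q ^ 2) ^ n * x) Filter.atTop (nhds (q * 0 * x)) := by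
        apply Filter.Tendsto.mul_const
        apply Filter.Tendsto.const_mul
        apply tendsto_pow_atTop_nhds_zero_of_norm_lt_one
        rw [norm_pow]
        calc ‖q‖ ^ 2 ≤ ‖q‖ * 1 := by
              rw [sq]
              exact mul_le_mul_of_nonneg_left hq.le (norm_nonneg q)
          _ < 1 := by simpa using hq
      simpa [pow_succ, pow_mul, sq, mul_pow, mul_comm, mul_assoc, mul_left_comm] using this
    have hden : Filter.Tendsto (fun n : ℕ => 1 - q * q ^ n) Filter.atTop (nhds 1) := by
      have : Filter.Tendsto (fun n : ℕ => q ^ n) Filter.atTop (nhds 0) :=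
        tendsto_pow_atTop_nhds_zero_of_norm_lt_one hq
      have := (this.const_mul q).const_sub 1
      simpa using this
    have := hnum.div hden one_ne_zero
    rw [zero_div] at this; exact this

/-- The `q`-shift equation for the Rogers–Ramanujan series:
for `|q| < 1` and all `x ∈ ℂ`, `RR(x) = RR(qx) + qx · RR(q²x)`. -/
theorem RR_q_shift_equation (q : ℂ) (hq : ‖q‖ < 1) (x : ℂ) :
    RR q x = RR q (q * x) + q * x * RR q (q ^ 2 * x) := by
  have h1 := RR_summable q hq x
  have h2 := RR_summable q hq (q * x)
  have h3 := RR_summable q hq (q ^ 2 * x)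
  have hd : ∀ n : ℕ, q ^ ((n + 1) ^ 2) * x ^ (n + 1) / qPoch q q (n + 1)
      - q ^ ((n + 1) ^ 2) * (q * x) ^ (n + 1) / qPoch q q (n + 1)
      = q * x * (q ^ (n ^ 2) * (q ^ 2 * x) ^ n / qPoch q q n) := by
    intro n
    have hP := qPoch_ne_zero q hq n
    have hone := one_sub_ne q hq n
    rw [show qPoch q q (n + 1) = qPoch q q n * (1 - q * q ^ n) from
      Finset.prod_range_succ _ n]
    rw [show (n + 1) ^ 2 = n ^ 2 + (2 * n + 1) by ring]
    field_simp
    ring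
  have key : RR q x - RR q (q * x) = q * x * RR q (q ^ 2 * x) := by
    rw [RR, RR, ← Summable.tsum_sub h1 h2]
    have hsum : Summable (fun n : ℕ => q ^ (n ^ 2) * x ^ n / qPoch q q n
        - q ^ (n ^ 2) * (q * x) ^ n / qPoch q q n) := h1.sub h2
    rw [Summable.tsum_eq_zero_add hsum]
    simp only [hd]
    rw [tsum_mul_left]
    simp [RR]
  linear_combination key
end

section
/- Let G_a, G_b, G_c : \mathbb{N} \to \mathbb{Z}[a,b,c,q] be the sequences of polynomials defined by G_a(0) = G_b(0) = G_c(0) = 1 and, for k \ge 1, G_a(k) = G_c(k-1) + a q^k G_a(k-1), G_b(k) = G_a(k) + b q^k G_b(k-1), G_c(k) = G_b(k) + c q^k G_b(k-1). Then for every k \ge 0: \((c q^{k+1} - a b q^{2k+3})\, G_b(k) + (1 + a q^{k+2} + b q^{k+2})\, G_b(k+1) - G_b(k+2) = 0\). -/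
open MvPolynomial

/-- The polynomial ring `ℤ[a,b,c,q]`. -/
noncomputable abbrev R4 : Type := MvPolynomial (Fin 4) ℤ

noncomputable def va : R4 := X 0
noncomputable def vb : R4 := X 1
noncomputable def vc : R4 := X 2
noncomputable def vq : R4 := X 3

/-- Weighted-words system for the gap matrix with rows (1,2,2),(1,1,2),(1,1,2):
if `Ga, Gb, Gc : ℕ → ℤ[a,b,c,q]` satisfy `Ga 0 = Gb 0 = Gc 0 = 1` and, for `k ≥ 1`,
`Ga k = Gc (k-1) + a q^k Ga (k-1)`, `Gb k = Ga k + b q^k Gb (k-1)`,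
`Gc k = Gb k + c q^k Gb (k-1)`, then for every `k ≥ 0`
`(c q^{k+1} - a b q^{2k+3}) Gb k + (1 + a q^{k+2} + b q^{k+2}) Gb (k+1) - Gb (k+2) = 0`. -/
theorem Gb_uncoupled_recurrence (Ga Gb Gc : ℕ → R4)
    (ha0 : Ga 0 = 1) (hb0 : Gb 0 = 1) (hc0 : Gc 0 = 1)
    (ha : ∀ k : ℕ, Ga (k + 1) = Gc k + va * vq ^ (k + 1) * Ga k)
    (hb : ∀ k : ℕ, Gb (k + 1) = Ga (k + 1) + vb * vq ^ (k + 1) * Gb k)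
    (hc : ∀ k : ℕ, Gc (k + 1) = Gb (k + 1) + vc * vq ^ (k + 1) * Gb k) :
    ∀ k : ℕ,
      (vc * vq ^ (k + 1) - va * vb * vq ^ (2 * k + 3)) * Gb k
        + (1 + va * vq ^ (k + 2) + vb * vq ^ (k + 2)) * Gb (k + 1)
        - Gb (k + 2) = 0 := by
  intro k
  have hGa : Ga (k + 1) = Gb (k + 1) - vb * vq ^ (k + 1) * Gb k := by
    rw [hb k]; ring
  rw [hb (k + 1), ha (k + 1), hc k, hGa]
  ring
end

section
/- Let G_a, G_b, G_c : \mathbb{N} \to \mathbb{Z}[a,b,c,q] be the sequences of polynomials defined by G_a(0) = G_b(0) = G_c(0) = 1 and, for k \ge 1, G_a(k) = G_c(k-1) + a q^k G_a(k-1), G_b(k) = G_a(k) + b q^k G_b(k-1), G_c(k) = G_b(k) + c q^k G_b(k-1). Then for every k \ge 0: \((-c q^{k+3} + a b q^{2k+5})\, G_c(k+1) + (-1 - a q^{k+3} - b q^{k+3})\, G_c(k+2) + G_c(k+3) = 0\). -/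
open MvPolynomial

/-- Weighted-words system for the gap matrix with rows (1,2,2),(1,1,2),(1,1,2):
if `Ga, Gb, Gc : ℕ → ℤ[a,b,c,q]` satisfy `Ga 0 = Gb 0 = Gc 0 = 1` and, for `k ≥ 1`,
`Ga k = Gc (k-1) + a q^k Ga (k-1)`, `Gb k = Ga k + b q^k Gb (k-1)`,
`Gc k = Gb k + c q^k Gb (k-1)`, then for every `k ≥ 0`
`(-c q^{k+3} + a b q^{2k+5}) Gc (k+1) + (-1 - a q^{k+3} - b q^{k+3}) Gc (k+2)
  + Gc (k+3) = 0`. -/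
theorem Gc_uncoupled_recurrence (Ga Gb Gc : ℕ → R4)
    (ha0 : Ga 0 = 1) (hb0 : Gb 0 = 1) (hc0 : Gc 0 = 1)
    (ha : ∀ k : ℕ, Ga (k + 1) = Gc k + va * vq ^ (k + 1) * Ga k)
    (hb : ∀ k : ℕ, Gb (k + 1) = Ga (k + 1) + vb * vq ^ (k + 1) * Gb k)
    (hc : ∀ k : ℕ, Gc (k + 1) = Gb (k + 1) + vc * vq ^ (k + 1) * Gb k) :
    ∀ k : ℕ,
      (-(vc * vq ^ (k + 3)) + va * vb * vq ^ (2 * k + 5)) * Gc (k + 1)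
        + (-1 - va * vq ^ (k + 3) - vb * vq ^ (k + 3)) * Gc (k + 2)
        + Gc (k + 3) = 0 := by
  intro k
  simp only [hc, hb, ha]
  ring
end

section
/- Let G_a, G_b, G_c : \mathbb{N} \to \mathbb{Z}[a,b,c,q] be the sequences of polynomials defined by G_a(0) = G_b(0) = G_c(0) = 1 and, for k \ge 1, G_a(k) = G_c(k-1) + a q^k G_a(k-1), G_b(k) = G_a(k) + b q^k G_b(k-1), G_c(k) = G_b(k) + c q^k G_b(k-1). Define u(k) to be the polynomial G_c(k+1) with c replaced by a b q, and v(k) to be the polynomial G_b(k) with a, b, c replaced by a q, b q, a b q^3 respectively. Then both w = u and w = v satisfy, for every k \ge 0, the same recurrence \((a b q^{k+4} - a b q^{2k+5})\, w(k) + (1 + a q^{k+3} + b q^{k+3})\, w(k+1) - w(k+2) = 0\). -/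
open MvPolynomial

/-- The substitution homomorphism `a ↦ a, b ↦ b, c ↦ a b q, q ↦ q` on `ℤ[a,b,c,q]`. -/
noncomputable def substC : R4 →ₐ[ℤ] R4 := aeval ![va, vb, va * vb * vq, vq]

/-- The substitution homomorphism `a ↦ a q, b ↦ b q, c ↦ a b q³, q ↦ q` on `ℤ[a,b,c,q]`. -/
noncomputable def substQ : R4 →ₐ[ℤ] R4 := aeval ![va * vq, vb * vq, va * vb * vq ^ 3, vq]

lemma substC_va : substC va = va := by simp [substC, va]
lemma substC_vb : substC vb = vb := by simp [substC, vb]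
lemma substC_vc : substC vc = va * vb * vq := by simp [substC, vc]
lemma substC_vq : substC vq = vq := by simp [substC, vq]
lemma substQ_va : substQ va = va * vq := by simp [substQ, va]
lemma substQ_vb : substQ vb = vb * vq := by simp [substQ, vb]
lemma substQ_vc : substQ vc = va * vb * vq ^ 3 := by simp [substQ, vc]
lemma substQ_vq : substQ vq = vq := by simp [substQ, vq]

lemma key_rec (Ga Gb Gc : ℕ → R4)
    (ha : ∀ k : ℕ, Ga (k + 1) = Gc k + va * vq ^ (k + 1) * Ga k)
    (hb : ∀ k : ℕ, Gb (k + 1) = Ga (k + 1) + vb * vq ^ (k + 1) * Gb k)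
    (hc : ∀ k : ℕ, Gc (k + 1) = Gb (k + 1) + vc * vq ^ (k + 1) * Gb k) :
    ∀ k : ℕ, Gb (k + 2) = (1 + (va + vb) * vq ^ (k + 2)) * Gb (k + 1)
      + (vc * vq ^ (k + 1) - va * vb * vq ^ (2 * k + 3)) * Gb k := by
  intro k
  have hGa1 : Ga (k + 1) = Gb (k + 1) - vb * vq ^ (k + 1) * Gb k := by
    rw [hb k]; ring
  have h1 := hb (k + 1)
  have h2 := ha (k + 1)
  have h3 := hc k
  rw [h2, h3, hGa1] at h1
  rw [show k + 1 + 1 = k + 2 from rfl] at h1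
  rw [h1]; ring

/-- Weighted-words system for the gap matrix with rows (1,2,2),(1,1,2),(1,1,2):
with `Ga, Gb, Gc` as usual, set `u k = Gc (k+1) [c ↦ a b q]` and
`v k = Gb k [a ↦ a q, b ↦ b q, c ↦ a b q³]`.  Then both `w = u` and `w = v` satisfy
`(a b q^{k+4} - a b q^{2k+5}) w k + (1 + a q^{k+3} + b q^{k+3}) w (k+1) - w (k+2) = 0`
for all `k ≥ 0`. -/
theorem u_and_v_same_recurrence (Ga Gb Gc : ℕ → R4)
    (ha0 : Ga 0 = 1) (hb0 : Gb 0 = 1) (hc0 : Gc 0 = 1)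
    (ha : ∀ k : ℕ, Ga (k + 1) = Gc k + va * vq ^ (k + 1) * Ga k)
    (hb : ∀ k : ℕ, Gb (k + 1) = Ga (k + 1) + vb * vq ^ (k + 1) * Gb k)
    (hc : ∀ k : ℕ, Gc (k + 1) = Gb (k + 1) + vc * vq ^ (k + 1) * Gb k)
    (u v : ℕ → R4)
    (hu : ∀ k : ℕ, u k = substC (Gc (k + 1)))
    (hv : ∀ k : ℕ, v k = substQ (Gb k)) :
    (∀ k : ℕ,
      (va * vb * vq ^ (k + 4) - va * vb * vq ^ (2 * k + 5)) * u k
        + (1 + va * vq ^ (k + 3) + vb * vq ^ (k + 3)) * u (k + 1) - u (k + 2) = 0) ∧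
    (∀ k : ℕ,
      (va * vb * vq ^ (k + 4) - va * vb * vq ^ (2 * k + 5)) * v k
        + (1 + va * vq ^ (k + 3) + vb * vq ^ (k + 3)) * v (k + 1) - v (k + 2) = 0) := by
  have key := key_rec Ga Gb Gc ha hb hc
  constructor
  · intro k
    set x := substC (Gb k) with hx
    set y := substC (Gb (k + 1)) with hy
    set z := substC (Gb (k + 2)) with hz
    set w3 := substC (Gb (k + 3)) with hw3
    have E1 : z = (1 + (va + vb) * vq ^ (k + 2)) * y
        + (va * vb * vq ^ (k + 2) - va * vb * vq ^ (2 * k + 3)) * x := by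
      rw [hz, key k, map_add, map_mul, map_mul, map_add, map_one, map_mul, map_pow,
        map_sub, map_mul, map_pow, map_mul, map_mul, map_add, map_pow,
        substC_va, substC_vb, substC_vc, substC_vq]
      ring
    have E2 : w3 = (1 + (va + vb) * vq ^ (k + 3)) * z
        + (va * vb * vq ^ (k + 3) - va * vb * vq ^ (2 * k + 5)) * y := by
      rw [hw3, show k + 3 = (k + 1) + 2 from rfl, key (k + 1), map_add, map_mul, map_mul,
        map_add, map_one, map_mul, map_pow, map_sub, map_mul, map_pow, map_mul, map_mul,
        map_add, map_pow, substC_va, substC_vb, substC_vc, substC_vq]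
      rw [hz, hy]
      ring_nf
    have hGc1 : substC (Gc (k + 1)) = y + va * vb * vq ^ (k + 2) * x := by
      rw [hc k, map_add, map_mul, map_mul, map_pow, substC_vc, substC_vq, ← hy, ← hx]
      ring
    have hGc2 : substC (Gc (k + 2)) = z + va * vb * vq ^ (k + 3) * y := by
      rw [hc (k + 1), map_add, map_mul, map_mul, map_pow, substC_vc, substC_vq, ← hz, ← hy]
      ring
    have hGc3 : substC (Gc (k + 3)) = w3 + va * vb * vq ^ (k + 4) * z := by
      rw [hc (k + 2), map_add, map_mul, map_mul, map_pow, substC_vc, substC_vq, ← hw3, ← hz]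
      ring
    rw [hu k, hu (k + 1), hu (k + 2), show k + 1 + 1 = k + 2 from rfl,
      show k + 2 + 1 = k + 3 from rfl, hGc1, hGc2, hGc3]
    linear_combination (-(va * vb * vq ^ (k + 4))) * E1 - E2
  · intro k
    have E1 : substQ (Gb (k + 2)) = (1 + va * vq ^ (k + 3) + vb * vq ^ (k + 3)) * substQ (Gb (k + 1))
        + (va * vb * vq ^ (k + 4) - va * vb * vq ^ (2 * k + 5)) * substQ (Gb k) := by
      rw [key k, map_add, map_mul, map_mul, map_add, map_one, map_mul, map_pow,
        map_sub, map_mul, map_pow, map_mul, map_mul, map_add, map_pow,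
        substQ_va, substQ_vb, substQ_vc, substQ_vq]
      ring
    rw [hv k, hv (k + 1), hv (k + 2), E1]
    ring
end

section
/- Let G_a, G_b, G_c : \mathbb{N} \to \mathbb{Z}[a,b,c,q] be the sequences of polynomials defined by G_a(0) = G_b(0) = G_c(0) = 1 and, for k \ge 1, G_a(k) = G_c(k-1) + a q^k G_a(k-1), G_b(k) = G_a(k) + b q^k G_b(k-1), G_c(k) = G_b(k) + c q^k G_b(k-1). Let P(k) \in \mathbb{Z}[a,b][q] denote G_c(k) with c replaced by a b q. Then, viewing elements of \mathbb{Z}[a,b][[q]], for every N \ge 0 there exists K such that for all k \ge K the coefficient of q^N in P(k) equals the coefficient of q^N in the infinite product \(\prod_{i \ge 1} (1 + a q^i)(1 + b q^i)\). In other words, P(k) converges q-adically to \((-aq;q)_\infty (-bq;q)_\infty\) as k \to \infty (the Alladi–Gordon weighted-words version of Schur's theorem). -/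
open MvPolynomial

/-- The ring `ℤ[a,b][q]` (polynomials in `q` with coefficients in `ℤ[a,b]`). -/
noncomputable abbrev S2 : Type := Polynomial (MvPolynomial (Fin 2) ℤ)

/-- `a` as an element of `ℤ[a,b][q]`. -/
noncomputable def sa : S2 := Polynomial.C (X 0)

/-- `b` as an element of `ℤ[a,b][q]`. -/
noncomputable def sb : S2 := Polynomial.C (X 1)

/-- The substitution homomorphism `ℤ[a,b,c,q] → ℤ[a,b][q]`,
`a ↦ a, b ↦ b, c ↦ a b q, q ↦ q`. -/
noncomputable def substCq : R4 →ₐ[ℤ] S2 :=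
  aeval ![sa, sb, sa * sb * Polynomial.X, Polynomial.X]


noncomputable def sigShift : S2 →+* S2 :=
  Polynomial.eval₂RingHom
    ((aeval ![sa * Polynomial.X, sb * Polynomial.X] :
        MvPolynomial (Fin 2) ℤ →ₐ[ℤ] S2) : MvPolynomial (Fin 2) ℤ →+* S2)
    Polynomial.X

lemma sig_sa : sigShift sa = sa * Polynomial.X := by simp [sigShift, sa]
lemma sig_sb : sigShift sb = sb * Polynomial.X := by simp [sigShift, sb]
lemma sig_X : sigShift Polynomial.X = Polynomial.X := by simp [sigShift]

lemma substCq_va : substCq va = sa := by simp [substCq, va]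
lemma substCq_vb : substCq vb = sb := by simp [substCq, vb]
lemma substCq_vc : substCq vc = sa * sb * Polynomial.X := by simp [substCq, vc]
lemma substCq_vq : substCq vq = Polynomial.X := by simp [substCq, vq]

/-- the partial products -/
noncomputable def PP (M : ℕ) : S2 :=
  ∏ i ∈ Finset.Icc 1 M, ((1 + sa * Polynomial.X ^ i) * (1 + sb * Polynomial.X ^ i))

noncomputable def fac : S2 := (1 + sa * Polynomial.X) * (1 + sb * Polynomial.X)

lemma PP_zero : PP 0 = 1 := by simp [PP]

lemma fac_def : fac = (1 + sa * Polynomial.X) * (1 + sb * Polynomial.X) := rfl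

lemma PP_succ (k : ℕ) :
    PP (k + 1) = PP k * ((1 + sa * Polynomial.X ^ (k+1)) * (1 + sb * Polynomial.X ^ (k+1))) := by
  simpa [PP] using Finset.prod_Icc_succ_top (by omega : 1 ≤ k + 1)
    (fun i => ((1 + sa * Polynomial.X ^ i) * (1 + sb * Polynomial.X ^ i)))

lemma sig_PP (k : ℕ) : fac * sigShift (PP k) = PP (k + 1) := by
  induction k with
  | zero =>
    rw [PP_zero, map_one, mul_one, PP_succ 0, PP_zero, one_mul, fac_def]
    ring
  | succ k ih =>
    have s1 : sigShift (1 + sa * Polynomial.X ^ (k+1)) = 1 + sa * Polynomial.X ^ (k+2) := by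
      rw [map_add, map_one, map_mul, map_pow, sig_sa, sig_X]; ring
    have s2 : sigShift (1 + sb * Polynomial.X ^ (k+1)) = 1 + sb * Polynomial.X ^ (k+2) := by
      rw [map_add, map_one, map_mul, map_pow, sig_sb, sig_X]; ring
    rw [PP_succ k, map_mul, map_mul, s1, s2, PP_succ (k+1), ← ih]
    ring

section Key

variable (A B C : ℕ → S2)
  (hA0 : A 0 = 1) (hB0 : B 0 = 1) (hC0 : C 0 = 1)
  (hA : ∀ k, A (k+1) = C k + sa * Polynomial.X ^ (k+1) * A k)
  (hB : ∀ k, B (k+1) = A (k+1) + sb * Polynomial.X ^ (k+1) * B k)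
  (hC : ∀ k, C (k+1) = B (k+1) + sa * sb * Polynomial.X ^ (k+2) * B k)

include hA0 hB0 hC0 hA hB hC

lemma key_IBIA : ∀ n : ℕ,
    (B (n+1) + sa * sb * Polynomial.X ^ (n+2) * B n = fac * sigShift (B n)) ∧
    (A (n+2) + sa * sb * Polynomial.X ^ (n+3) * A (n+1) = fac * sigShift (A (n+1))) := by
  intro n
  induction n with
  | zero =>
    constructor
    · rw [hB 0, hA 0, hA0, hB0, hC0, map_one, fac_def]; ring
    · have a1 : A 1 = 1 + sa * Polynomial.X := by
        rw [hA 0, hA0, hC0]; ring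
      have sa1 : sigShift (A 1) = 1 + sa * Polynomial.X ^ 2 := by
        rw [a1, map_add, map_one, map_mul, sig_sa, sig_X]; ring
      rw [hA 1, sa1, hC 0, hB 0, a1, hB0, fac_def]; ring
  | succ n ih =>
    obtain ⟨ib, ia⟩ := ih
    -- IB at n+1
    have g2 : sigShift (B (n+1)) =
        sigShift (A (n+1)) + sb * Polynomial.X ^ (n+2) * sigShift (B n) := by
      rw [hB n, map_add, map_mul, map_mul, map_pow, sig_sb, sig_X]; ring
    have ibnew : B (n+2) + sa * sb * Polynomial.X ^ (n+3) * B (n+1)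
        = fac * sigShift (B (n+1)) := by
      linear_combination (hB (n+1)) - fac * g2 + ia
        + (sb * Polynomial.X ^ (n+2)) * ib + (sa * sb * Polynomial.X ^ (n+3)) * (hB n)
    refine ⟨ibnew, ?_⟩
    -- IA at n+1
    have h3 : sigShift (A (n+2)) =
        sigShift (C (n+1)) + sa * Polynomial.X ^ (n+3) * sigShift (A (n+1)) := by
      rw [hA (n+1), map_add, map_mul, map_mul, map_pow, sig_sa, sig_X]; ring
    have h4 : sigShift (C (n+1)) =
        sigShift (B (n+1)) + sa * sb * Polynomial.X ^ (n+4) * sigShift (B n) := by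
      rw [hC n, map_add, map_mul, map_mul, map_mul, map_pow, sig_sa, sig_sb, sig_X]; ring
    linear_combination (hA (n+2)) + (hC (n+1)) - fac * h3 - fac * h4 + ibnew
      + (sa * sb * Polynomial.X ^ (n+4)) * (ib + (hA (n+1)) + (hC n))
      + (sa * Polynomial.X ^ (n+3)) * ia

lemma key_IC : ∀ n : ℕ, C (n+1) = fac * sigShift (B n) := by
  intro n
  rw [hC n]
  exact (key_IBIA A B C hA0 hB0 hC0 hA hB hC n).1

lemma key_ID : ∀ n : ℕ, C (n+2) =
    fac * sigShift (C (n+1)) - sa * sb * Polynomial.X ^ (n+4) * C (n+1) := by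
  intro n
  have e : sigShift (C (n+1)) =
      sigShift (B (n+1)) + sa * sb * Polynomial.X ^ (n+4) * sigShift (B n) := by
    rw [hC n, map_add, map_mul, map_mul, map_mul, map_pow, sig_sa, sig_sb, sig_X]; ring
  have i1 := key_IC A B C hA0 hB0 hC0 hA hB hC n
  have i2 := key_IC A B C hA0 hB0 hC0 hA hB hC (n+1)
  linear_combination i2 - fac * e + (sa * sb * Polynomial.X ^ (n+4)) * i1

lemma key_C1 : C 1 = PP 1 := by
  rw [hC 0, hB 0, hA 0, hA0, hB0, hC0, PP, Finset.Icc_self, Finset.prod_singleton]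
  ring

/-- every C k differs from the partial product by an element of the ideal (sa, sb) -/
lemma key_Q0 : ∀ k : ℕ, ∃ u v : S2, C k = PP k + (sa * u + sb * v) := by
  intro k
  induction k with
  | zero => exact ⟨0, 0, by rw [hC0, PP_zero]; ring⟩
  | succ k ih =>
    cases k with
    | zero => exact ⟨0, 0, by rw [key_C1 A B C hA0 hB0 hC0 hA hB hC]; ring⟩
    | succ m =>
      obtain ⟨u, v, huv⟩ := ih
      have e : sigShift (C (m+1)) = sigShift (PP (m+1))
          + (sa * Polynomial.X * sigShift u + sb * Polynomial.X * sigShift v) := by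
        rw [huv, map_add, map_add, map_mul, map_mul, sig_sa, sig_sb]
        try ring
      refine ⟨fac * Polynomial.X * sigShift u - sb * Polynomial.X ^ (m+4) * C (m+1),
        fac * Polynomial.X * sigShift v, ?_⟩
      have hd := key_ID A B C hA0 hB0 hC0 hA hB hC m
      have hp := sig_PP (m+1)
      linear_combination hd + fac * e + hp

lemma key_main : ∀ N k : ℕ, N ≤ k →
    ∃ u v : S2, C k = PP k + Polynomial.X ^ N * (sa * u + sb * v) := by
  intro N
  induction N with
  | zero =>
    intro k _
    obtain ⟨u, v, huv⟩ := key_Q0 A B C hA0 hB0 hC0 hA hB hC k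
    exact ⟨u, v, by rw [huv]; ring⟩
  | succ N ihN =>
    intro k hk
    match k, hk with
    | 0, hk => exact absurd hk (by omega)
    | 1, hk =>
      have hN : N = 0 := by omega
      subst hN
      refine ⟨0, 0, ?_⟩
      rw [key_C1 A B C hA0 hB0 hC0 hA hB hC]; ring
    | (m+2), hk =>
      obtain ⟨u, v, huv⟩ := ihN (m+1) (by omega)
      have e : sigShift (C (m+1)) = sigShift (PP (m+1))
          + Polynomial.X ^ N * (sa * Polynomial.X * sigShift u
            + sb * Polynomial.X * sigShift v) := by
        rw [huv, map_add, map_mul, map_pow, map_add, map_mul, map_mul, sig_sa, sig_sb,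
          sig_X]
        try ring
      have hd := key_ID A B C hA0 hB0 hC0 hA hB hC m
      have hp := sig_PP (m+1)
      have hx : (Polynomial.X : S2) ^ (m+4) = Polynomial.X ^ (N+1) * Polynomial.X ^ (m+3-N) := by
        rw [← pow_add]
        congr 1
        omega
      refine ⟨fac * sigShift u - sb * Polynomial.X ^ (m+3-N) * C (m+1),
        fac * sigShift v, ?_⟩
      linear_combination hd + fac * e + hp - (sa * sb * C (m+1)) * hx

end Key

/-- The Alladi–Gordon weighted-words version of Schur's theorem: with `Ga, Gb, Gc` the
weighted-words system for the gap matrix with rows (1,2,2),(1,1,2),(1,1,2), let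
`P k = Gc k [c ↦ a b q] ∈ ℤ[a,b][q]`, and let `F N` be the coefficient of `q^N` in the
infinite product `∏_{i ≥ 1} (1 + a qⁱ)(1 + b qⁱ)` (characterized by the fact that the
coefficients of `q^N` in the partial products `∏_{i=1}^{M}` with `M ≥ N` all equal `F N`).
Then for every `N ≥ 0` there exists `K` such that for all `k ≥ K` the coefficient of
`q^N` in `P k` equals `F N`; i.e. `P k → (-aq;q)_∞ (-bq;q)_∞` q-adically as `k → ∞`. -/
theorem weighted_words_schur_limit (Ga Gb Gc : ℕ → R4)
    (ha0 : Ga 0 = 1) (hb0 : Gb 0 = 1) (hc0 : Gc 0 = 1)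
    (ha : ∀ k : ℕ, Ga (k + 1) = Gc k + va * vq ^ (k + 1) * Ga k)
    (hb : ∀ k : ℕ, Gb (k + 1) = Ga (k + 1) + vb * vq ^ (k + 1) * Gb k)
    (hc : ∀ k : ℕ, Gc (k + 1) = Gb (k + 1) + vc * vq ^ (k + 1) * Gb k)
    (P : ℕ → S2) (hP : ∀ k : ℕ, P k = substCq (Gc k))
    (F : ℕ → MvPolynomial (Fin 2) ℤ)
    (hF : ∀ N M : ℕ, N ≤ M →
      F N = (∏ i ∈ Finset.Icc 1 M,
        ((1 + sa * Polynomial.X ^ i) * (1 + sb * Polynomial.X ^ i))).coeff N) :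
    ∀ N : ℕ, ∃ K : ℕ, ∀ k : ℕ, K ≤ k → (P k).coeff N = F N := by
  intro N
  refine ⟨N + 1, fun k hk => ?_⟩
  have hA0 : substCq (Ga 0) = 1 := by rw [ha0, map_one]
  have hB0 : substCq (Gb 0) = 1 := by rw [hb0, map_one]
  have hC0 : substCq (Gc 0) = 1 := by rw [hc0, map_one]
  have hA' : ∀ j : ℕ, substCq (Ga (j+1)) =
      substCq (Gc j) + sa * Polynomial.X ^ (j+1) * substCq (Ga j) := by
    intro j
    rw [ha j, map_add, map_mul, map_mul, map_pow, substCq_va, substCq_vq]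
  have hB' : ∀ j : ℕ, substCq (Gb (j+1)) =
      substCq (Ga (j+1)) + sb * Polynomial.X ^ (j+1) * substCq (Gb j) := by
    intro j
    rw [hb j, map_add, map_mul, map_mul, map_pow, substCq_vb, substCq_vq]
  have hC' : ∀ j : ℕ, substCq (Gc (j+1)) =
      substCq (Gb (j+1)) + sa * sb * Polynomial.X ^ (j+2) * substCq (Gb j) := by
    intro j
    rw [hc j, map_add, map_mul, map_mul, map_pow, substCq_vc, substCq_vq]
    ring
  obtain ⟨u, v, huv⟩ := key_main (fun k => substCq (Ga k)) (fun k => substCq (Gb k))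
    (fun k => substCq (Gc k)) hA0 hB0 hC0 hA' hB' hC' (N+1) k hk
  have hz : (Polynomial.X ^ (N+1) * (sa * u + sb * v)).coeff N = 0 := by
    rw [mul_comm, Polynomial.coeff_mul_X_pow']
    rw [if_neg (by omega)]
  rw [hP k]
  have : substCq (Gc k) = PP k + Polynomial.X ^ (N+1) * (sa * u + sb * v) := huv
  rw [this, Polynomial.coeff_add, hz, add_zero, hF N k (by omega)]
  rfl
end
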